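/- Let (v₊, v₋) and (v'₊, v'₋) be single-mode Gaussian covariance spectra (v₊ ≥ v₋ > 0, v₊v₋ ≥ 1/4, and likewise for the primed pair). Then the following are equivalent: (i) N₁(v'₊,v'₋) ≤ N₁(v₊,v₋) and N₃(v'₊,v'₋) ≤ N₃(v₊,v₋); (ii) there exist η ∈ [0,1] and reals c₊ ≥ 0, c₋ ≥ 0 such that v'₊ = v₊/(1 − η + 2η v₊) + c₊ and v'₋ = (1−η)v₋ + η/2 + c₋. -/

import Mathlib

/-- The nonclassicality measure `N₁(v₊, v₋) := max {1 − 2 v₋, 0}`. -/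
noncomputable def N1 (vp vm : ℝ) : ℝ := max (1 - 2 * vm) 0

/-- The nonclassicality measure `N₃ := N₁ / (2 − 1/v₊)` for `v₊ > 1/2`, and `0` at `v₊ = 1/2`. -/
noncomputable def N3 (vp vm : ℝ) : ℝ :=
  if 1 / 2 < vp then N1 vp vm / (2 - 1 / vp) else 0

lemma N1_nonneg (vp vm : ℝ) : 0 ≤ N1 vp vm := le_max_right _ _

lemma N3_nonneg (vp vm : ℝ) : 0 ≤ N3 vp vm := by
  unfold N3
  split
  · rename_i h
    have hvp : (0:ℝ) < vp := by linarith
    have h2 : 1 / vp < 2 := by rw [div_lt_iff₀ hvp]; nlinarith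
    exact div_nonneg (N1_nonneg _ _) (by linarith)
  · exact le_refl 0

set_option maxHeartbeats 2000000 in
/-- single-mode Gaussian `𝒢𝒫_ℕ` conversion at the level of covariance
spectra: `N₁` and `N₃` do not increase iff the target spectrum is obtained from the
source by the beam-splitter/homodyne/feed-forward map for some reflectivity `η ∈ [0,1]`,
followed by adding nonnegative classical noise `c₊, c₋` to the two principal quadratures. -/
theorem single_mode_GPN_conversion (vp vm vp' vm' : ℝ)
    (h1 : vm ≤ vp) (h2 : 0 < vm) (h3 : 1 / 4 ≤ vp * vm)
    (h1' : vm' ≤ vp') (h2' : 0 < vm') (h3' : 1 / 4 ≤ vp' * vm') :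
    (N1 vp' vm' ≤ N1 vp vm ∧ N3 vp' vm' ≤ N3 vp vm) ↔
      ∃ η cp cm : ℝ,
        0 ≤ η ∧ η ≤ 1 ∧ 0 ≤ cp ∧ 0 ≤ cm ∧
        vp' = vp / (1 - η + 2 * η * vp) + cp ∧
        vm' = (1 - η) * vm + η / 2 + cm := by
  have vppos : 0 < vp := lt_of_lt_of_le h2 h1
  have vp'pos : 0 < vp' := lt_of_lt_of_le h2' h1'
  have hhalf : 1 / 2 ≤ vp := by nlinarith
  have hhalf' : 1 / 2 ≤ vp' := by nlinarith
  constructor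
  · rintro ⟨hN1, hN3⟩
    by_cases hm' : 1 / 2 ≤ vm'
    · -- take η = 1
      refine ⟨1, vp' - 1 / 2, vm' - 1 / 2, by norm_num, le_refl 1, by linarith, by linarith,
        ?_, by ring⟩
      have hd : (1 : ℝ) - 1 + 2 * 1 * vp = 2 * vp := by ring
      have h2vp : vp / (2 * vp) = 1 / 2 := by field_simp
      rw [hd, h2vp]; ring
    · push_neg at hm'
      have hm'pos : 0 < 1 - 2 * vm' := by linarith
      have hN1'eq : N1 vp' vm' = 1 - 2 * vm' := max_eq_left (le_of_lt hm'pos)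
      have hmm : 0 < 1 - 2 * vm := by
        by_contra h
        push_neg at h
        have : N1 vp vm = 0 := max_eq_right (by linarith)
        rw [hN1'eq, this] at hN1
        linarith
      have hN1eq : N1 vp vm = 1 - 2 * vm := max_eq_left (le_of_lt hmm)
      have hN1c : 1 - 2 * vm' ≤ 1 - 2 * vm := by rw [hN1'eq, hN1eq] at hN1; exact hN1
      have hvphalf : 1 / 2 < vp := by nlinarith
      have hvp'half : 1 / 2 < vp' := by nlinarith
      have hdp : 0 < 2 - 1 / vp := by
        have : 1 / vp < 2 := by rw [div_lt_iff₀ vppos]; linarith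
        linarith
      have hdp' : 0 < 2 - 1 / vp' := by
        have : 1 / vp' < 2 := by rw [div_lt_iff₀ vp'pos]; linarith
        linarith
      have hc : (1 - 2 * vm') / (2 - 1 / vp') ≤ (1 - 2 * vm) / (2 - 1 / vp) := by
        rw [N3, N3, if_pos hvphalf, if_pos hvp'half, hN1'eq, hN1eq] at hN3
        exact hN3
      have cross : (1 - 2 * vm') * (2 - 1 / vp) ≤ (1 - 2 * vm) * (2 - 1 / vp') :=
        (div_le_div_iff₀ hdp' hdp).mp hc
      have cross2 : (1 - 2 * vm') * (2 * vp - 1) * vp' ≤ (1 - 2 * vm) * (2 * vp' - 1) * vp := by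
        have h := mul_le_mul_of_nonneg_right cross (le_of_lt (mul_pos vppos vp'pos))
        have e1 : (1 - 2 * vm') * (2 - 1 / vp) * (vp * vp')
            = (1 - 2 * vm') * (2 * vp - 1) * vp' := by
          field_simp
        have e2 : (1 - 2 * vm) * (2 - 1 / vp') * (vp * vp')
            = (1 - 2 * vm) * (2 * vp' - 1) * vp := by
          field_simp
        linarith [h, e1, e2]
      set η : ℝ := 1 - (1 - 2 * vm') / (1 - 2 * vm) with hηdef
      have hq0 : 0 < (1 - 2 * vm') / (1 - 2 * vm) := div_pos hm'pos hmm
      have hq1 : (1 - 2 * vm') / (1 - 2 * vm) ≤ 1 := (div_le_one hmm).mpr hN1c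
      have hη0 : 0 ≤ η := by simp only [hηdef]; linarith
      have hη1 : η ≤ 1 := by simp only [hηdef]; linarith
      have hη : (1 - η) * (1 - 2 * vm) = 1 - 2 * vm' := by
        simp only [hηdef]
        field_simp
        ring
      have hD : 0 < 1 - η + 2 * η * vp := by nlinarith
      have key : vp ≤ vp' * (1 - η + 2 * η * vp) := by
        have hη' : η * (1 - 2 * vm) = (1 - 2 * vm) - (1 - 2 * vm') := by
          linear_combination -hη
        have expand : vp' * (1 - η + 2 * η * vp) * (1 - 2 * vm)
            = vp' * (1 - 2 * vm) + vp' * (2 * vp - 1) * (η * (1 - 2 * vm)) := by ring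
        have hgoal : vp * (1 - 2 * vm) ≤ vp' * (1 - η + 2 * η * vp) * (1 - 2 * vm) := by
          rw [expand, hη']
          linarith [cross2]
        exact le_of_mul_le_mul_right hgoal hmm
      refine ⟨η, vp' - vp / (1 - η + 2 * η * vp), 0, hη0, hη1, ?_, le_refl 0, by ring, ?_⟩
      · have : vp / (1 - η + 2 * η * vp) ≤ vp' := by
          rw [div_le_iff₀ hD]; linarith [key]
        linarith
      · linear_combination hη / 2
  · rintro ⟨η, cp, cm, hη0, hη1, hcp, hcm, hvpe, hvme⟩
    have hD : (1 : ℝ) ≤ 1 - η + 2 * η * vp := by nlinarith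
    have hDpos : (0 : ℝ) < 1 - η + 2 * η * vp := by linarith
    have hvp'lb : vp / (1 - η + 2 * η * vp) ≤ vp' := by
      have hbpos : 0 ≤ cp := hcp
      rw [hvpe]; linarith
    constructor
    · -- N1 bound
      unfold N1
      apply max_le _ (le_max_right _ _)
      linarith [le_max_left (1 - 2 * vm) (0:ℝ), le_max_right (1 - 2 * vm) (0:ℝ),
        mul_nonneg (by linarith : (0:ℝ) ≤ 1 - η)
          (by linarith [le_max_left (1 - 2 * vm) (0:ℝ)] :
            (0:ℝ) ≤ max (1 - 2 * vm) 0 - (1 - 2 * vm)),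
        mul_nonneg hη0 (le_max_right (1 - 2 * vm) (0:ℝ))]
    · -- N3 bound
      by_cases hvp'half : 1 / 2 < vp'
      · by_cases hvphalf : 1 / 2 < vp
        · by_cases hηlt : η < 1
          · -- main case
            rw [N3, N3, if_pos hvphalf, if_pos hvp'half]
            have hdp : 0 < 2 - 1 / vp := by
              have : 1 / vp < 2 := by rw [div_lt_iff₀ vppos]; linarith
              linarith
            have h1' : 1 / vp' ≤ (1 - η + 2 * η * vp) / vp := by
              have hvd : vp ≤ vp' * (1 - η + 2 * η * vp) := by
                have := (div_le_iff₀ hDpos).mp hvp'lb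
                linarith
              rw [div_le_div_iff₀ vp'pos vppos]
              nlinarith
            have e : (1 - η + 2 * η * vp) / vp = 1 / vp + η * (2 - 1 / vp) := by
              field_simp; ring
            have hbd : (1 - η) * (2 - 1 / vp) ≤ 2 - 1 / vp' := by
              nlinarith [h1', e]
            have hdd : 0 < (1 - η) * (2 - 1 / vp) := mul_pos (by linarith) hdp
            have hnum : N1 vp' vm' ≤ (1 - η) * N1 vp vm := by
              unfold N1
              apply max_le
              · nlinarith [le_max_left (1 - 2 * vm) (0:ℝ),
                  mul_nonneg (by linarith : (0:ℝ) ≤ 1 - η)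
                    (by linarith [le_max_left (1 - 2 * vm) (0:ℝ)] :
                      (0:ℝ) ≤ max (1 - 2 * vm) 0 - (1 - 2 * vm))]
              · exact mul_nonneg (by linarith) (le_max_right _ _)
            calc N1 vp' vm' / (2 - 1 / vp')
                ≤ ((1 - η) * N1 vp vm) / ((1 - η) * (2 - 1 / vp)) :=
                  div_le_div₀ (mul_nonneg (by linarith) (N1_nonneg _ _)) hnum hdd hbd
              _ = N1 vp vm / (2 - 1 / vp) :=
                  mul_div_mul_left _ _ (by linarith : (1:ℝ) - η ≠ 0)
          · -- η = 1
            have hηe : η = 1 := le_antisymm hη1 (not_lt.mp hηlt)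
            have : vm' = 1 / 2 + cm := by rw [hvme, hηe]; ring
            have hN1' : N1 vp' vm' = 0 := max_eq_right (by rw [this]; linarith)
            rw [N3, if_pos hvp'half, hN1', zero_div]
            exact N3_nonneg _ _
        · -- vp = 1/2
          have hvpe2 : vp = 1 / 2 := le_antisymm (not_lt.mp hvphalf) hhalf
          have hvm2 : vm = 1 / 2 := by nlinarith
          have : vm' = 1 / 2 + cm := by rw [hvme, hvm2]; ring
          have hN1' : N1 vp' vm' = 0 := max_eq_right (by rw [this]; linarith)
          rw [N3, if_pos hvp'half, hN1', zero_div]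
          exact N3_nonneg _ _
      · rw [N3, if_neg hvp'half]
        exact N3_nonneg _ _
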